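/- Let G_1 and G_2 be finite groups with gcd(|G_1|, |G_2|) = 1. If (H_1, K_1) is a strong Shoda pair of G_1 and (H_2, K_2) is a strong Shoda pair of G_2, then (H_1 × H_2, K_1 × K_2) is a strong Shoda pair of G_1 × G_2. -/

import Mathlib

lemma SSP.normalizer_prod {G₁ G₂ : Type*} [Group G₁] [Group G₂]
    (K₁ : Subgroup G₁) (K₂ : Subgroup G₂) :
    Subgroup.normalizer ((K₁.prod K₂ : Subgroup (G₁ × G₂)) : Set (G₁ × G₂)) =
      (Subgroup.normalizer (K₁ : Set G₁)).prod (Subgroup.normalizer (K₂ : Set G₂)) := by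
  ext ⟨g₁, g₂⟩
  simp only [Subgroup.mem_normalizer_iff, Subgroup.mem_prod]
  constructor
  · intro h
    constructor
    · intro k
      simpa [K₂.one_mem] using h (k, 1)
    · intro k
      simpa [K₁.one_mem] using h (1, k)
  · rintro ⟨h1, h2⟩ ⟨k₁, k₂⟩
    simp [Subgroup.mem_prod, ← h1 k₁, ← h2 k₂]

lemma SSP.isCyclic_prod_of_coprime {A B : Type*} [Group A] [Group B] [Finite A] [Finite B]
    (hA : IsCyclic A) (hB : IsCyclic B)
    (h : Nat.Coprime (Nat.card A) (Nat.card B)) : IsCyclic (A × B) := by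
  letI : CommGroup A := hA.commGroup
  letI : CommGroup B := hB.commGroup
  refine IsCyclic.of_exponent_eq_card ?_
  rw [Monoid.exponent_prod, hA.exponent_eq_card, hB.exponent_eq_card, Nat.card_prod]
  exact Nat.Coprime.lcm_eq_mul h

/-- A strong Shoda pair (H, K) of a group G: K ≤ H, H is a normal subgroup of
N_G(K), and the image H/K of H in N_G(K)/K is cyclic and a maximal abelian
subgroup of N_G(K)/K. -/
def IsStrongShodaPair {G : Type*} [Group G] (H K : Subgroup G) : Prop :=
  K ≤ H ∧ H ≤ (Subgroup.normalizer (K : Set G)) ∧ (H.subgroupOf (Subgroup.normalizer (K : Set G))).Normal ∧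
  IsCyclic ((H.subgroupOf (Subgroup.normalizer (K : Set G))).map
      (QuotientGroup.mk' (K.subgroupOf (Subgroup.normalizer (K : Set G))))) ∧
  (∀ x ∈ (H.subgroupOf (Subgroup.normalizer (K : Set G))).map
      (QuotientGroup.mk' (K.subgroupOf (Subgroup.normalizer (K : Set G)))),
    ∀ y ∈ (H.subgroupOf (Subgroup.normalizer (K : Set G))).map
      (QuotientGroup.mk' (K.subgroupOf (Subgroup.normalizer (K : Set G)))), x * y = y * x) ∧
  ∀ A : Subgroup ((Subgroup.normalizer (K : Set G)) ⧸ K.subgroupOf (Subgroup.normalizer (K : Set G))),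
    (H.subgroupOf (Subgroup.normalizer (K : Set G))).map
        (QuotientGroup.mk' (K.subgroupOf (Subgroup.normalizer (K : Set G)))) ≤ A →
    (∀ x ∈ A, ∀ y ∈ A, x * y = y * x) →
    A = (H.subgroupOf (Subgroup.normalizer (K : Set G))).map
        (QuotientGroup.mk' (K.subgroupOf (Subgroup.normalizer (K : Set G))))

/-- if gcd(|G₁|,|G₂|)=1 and (H₁,K₁), (H₂,K₂) are strong Shoda
pairs of G₁ and G₂ respectively, then (H₁×H₂, K₁×K₂) is a strong Shoda pair
of G₁ × G₂. -/
theorem strong_shoda_pair_prod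
    (G₁ G₂ : Type*) [Group G₁] [Group G₂] [Finite G₁] [Finite G₂]
    (hcop : Nat.Coprime (Nat.card G₁) (Nat.card G₂))
    (H₁ K₁ : Subgroup G₁) (H₂ K₂ : Subgroup G₂)
    (h₁ : IsStrongShodaPair H₁ K₁) (h₂ : IsStrongShodaPair H₂ K₂) :
    IsStrongShodaPair (H₁.prod H₂) (K₁.prod K₂) := by
  obtain ⟨hk1, hn1, hnorm1, hcyc1, hcomm1, hmax1⟩ := h₁
  obtain ⟨hk2, hn2, hnorm2, hcyc2, hcomm2, hmax2⟩ := h₂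
  set N₁ := Subgroup.normalizer (K₁ : Set G₁) with hN₁
  set N₂ := Subgroup.normalizer (K₂ : Set G₂) with hN₂
  have hNeq : Subgroup.normalizer ((K₁.prod K₂ : Subgroup (G₁ × G₂)) : Set (G₁ × G₂)) = N₁.prod N₂ := SSP.normalizer_prod K₁ K₂
  set N := Subgroup.normalizer ((K₁.prod K₂ : Subgroup (G₁ × G₂)) : Set (G₁ × G₂)) with hN
  have hmem : ∀ n : N, (n : G₁ × G₂).1 ∈ N₁ ∧ (n : G₁ × G₂).2 ∈ N₂ := by
    intro n
    exact hNeq.le n.2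
  -- the comparison homomorphism
  let f : N →* (N₁ ⧸ K₁.subgroupOf N₁) × (N₂ ⧸ K₂.subgroupOf N₂) :=
    { toFun := fun n => (QuotientGroup.mk ⟨(n : G₁ × G₂).1, (hmem n).1⟩,
        QuotientGroup.mk ⟨(n : G₁ × G₂).2, (hmem n).2⟩)
      map_one' := rfl
      map_mul' := fun a b => rfl }
  have hfsurj : Function.Surjective f := by
    rintro ⟨x, y⟩
    obtain ⟨a, rfl⟩ := QuotientGroup.mk_surjective x
    obtain ⟨b, rfl⟩ := QuotientGroup.mk_surjective y
    exact ⟨⟨((a : G₁), (b : G₂)), hNeq.ge ⟨a.2, b.2⟩⟩, rfl⟩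
  have hker : f.ker = (K₁.prod K₂).subgroupOf N := by
    ext n
    simp only [MonoidHom.mem_ker, Prod.mk_eq_one, f, MonoidHom.coe_mk, OneHom.coe_mk,
      QuotientGroup.eq_one_iff, Subgroup.mem_subgroupOf, Subgroup.mem_prod]
    exact Prod.mk_eq_one.trans (and_congr (QuotientGroup.eq_one_iff _) (QuotientGroup.eq_one_iff _))
  let e : (N ⧸ (K₁.prod K₂).subgroupOf N) ≃*
      (N₁ ⧸ K₁.subgroupOf N₁) × (N₂ ⧸ K₂.subgroupOf N₂) :=
    (QuotientGroup.quotientMulEquivOfEq hker.symm).trans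
      (QuotientGroup.quotientKerEquivOfSurjective f hfsurj)
  have he : ∀ n : N, e (QuotientGroup.mk n) = f n := by
    intro n
    rfl
  set M := ((H₁.prod H₂).subgroupOf N).map
      (QuotientGroup.mk' ((K₁.prod K₂).subgroupOf N)) with hM
  set M₁ := (H₁.subgroupOf N₁).map (QuotientGroup.mk' (K₁.subgroupOf N₁)) with hM₁
  set M₂ := (H₂.subgroupOf N₂).map (QuotientGroup.mk' (K₂.subgroupOf N₂)) with hM₂
  have himg : M.map e.toMonoidHom = M₁.prod M₂ := by
    ext x
    constructor
    · rintro ⟨y, hy, rfl⟩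
      obtain ⟨n, hn, rfl⟩ := hy
      have hn' : (n : G₁ × G₂) ∈ H₁.prod H₂ := hn
      have hfn : e.toMonoidHom ((QuotientGroup.mk' ((K₁.prod K₂).subgroupOf N)) n) = f n := he n
      rw [hfn]
      exact Subgroup.mem_prod.mpr ⟨Subgroup.mem_map.mpr ⟨⟨(n : G₁ × G₂).1, (hmem n).1⟩, hn'.1, rfl⟩,
        Subgroup.mem_map.mpr ⟨⟨(n : G₁ × G₂).2, (hmem n).2⟩, hn'.2, rfl⟩⟩
    · intro hx
      obtain ⟨hx1, hx2⟩ := Subgroup.mem_prod.mp hx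
      obtain ⟨a, ha, ha'⟩ := Subgroup.mem_map.mp hx1
      obtain ⟨b, hb, hb'⟩ := Subgroup.mem_map.mp hx2
      refine ⟨(QuotientGroup.mk' ((K₁.prod K₂).subgroupOf N))
          ⟨((a : G₁), (b : G₂)), hNeq.ge ⟨a.2, b.2⟩⟩,
        ⟨⟨((a : G₁), (b : G₂)), hNeq.ge ⟨a.2, b.2⟩⟩, ?_, rfl⟩, ?_⟩
      · show ((a : G₁), (b : G₂)) ∈ H₁.prod H₂
        exact ⟨ha, hb⟩
      · show f ⟨((a : G₁), (b : G₂)), hNeq.ge ⟨a.2, b.2⟩⟩ = x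
        ext
        · exact ha'
        · exact hb'
  refine ⟨?_, ?_, ?_, ?_, ?_, ?_⟩
  · exact Subgroup.prod_mono hk1 hk2
  · exact le_trans (Subgroup.prod_mono hn1 hn2) hNeq.ge
  · constructor
    intro h hh n
    rw [Subgroup.mem_subgroupOf, Subgroup.mem_prod] at hh ⊢
    constructor
    · exact hnorm1.conj_mem ⟨(h : G₁ × G₂).1, (hmem h).1⟩ hh.1 ⟨(n : G₁ × G₂).1, (hmem n).1⟩
    · exact hnorm2.conj_mem ⟨(h : G₁ × G₂).2, (hmem h).2⟩ hh.2 ⟨(n : G₁ × G₂).2, (hmem n).2⟩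
  · -- cyclicity
    have hd1 : Nat.card M₁ ∣ Nat.card G₁ :=
      (Subgroup.card_subgroup_dvd_card M₁).trans
        ((Subgroup.card_quotient_dvd_card _).trans (Subgroup.card_subgroup_dvd_card N₁))
    have hd2 : Nat.card M₂ ∣ Nat.card G₂ :=
      (Subgroup.card_subgroup_dvd_card M₂).trans
        ((Subgroup.card_quotient_dvd_card _).trans (Subgroup.card_subgroup_dvd_card N₂))
    have hcop' : Nat.Coprime (Nat.card M₁) (Nat.card M₂) :=
      Nat.Coprime.coprime_dvd_right hd2 (Nat.Coprime.coprime_dvd_left hd1 hcop)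
    have hcyc : IsCyclic (M₁ × M₂) := SSP.isCyclic_prod_of_coprime hcyc1 hcyc2 hcop'
    have e2 : M ≃* (M₁ × M₂) :=
      ((M.equivMapOfInjective e.toMonoidHom e.injective).trans
        (MulEquiv.subgroupCongr himg)).trans (M₁.prodEquiv M₂)
    exact isCyclic_of_surjective e2.symm e2.symm.surjective
  · -- commutativity
    intro x hx y hy
    apply e.injective
    have hx' : e x ∈ M₁.prod M₂ := by
      rw [← himg]; exact ⟨x, hx, rfl⟩
    have hy' : e y ∈ M₁.prod M₂ := by
      rw [← himg]; exact ⟨y, hy, rfl⟩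
    rw [map_mul, map_mul]
    ext
    · exact hcomm1 _ hx'.1 _ hy'.1
    · exact hcomm2 _ hx'.2 _ hy'.2
  · -- maximality
    intro A hMA hAcomm
    set B := A.map e.toMonoidHom with hB
    have hBcomm : ∀ x ∈ B, ∀ y ∈ B, x * y = y * x := by
      rintro x ⟨a, ha, rfl⟩ y ⟨b, hb, rfl⟩
      rw [← map_mul, ← map_mul, hAcomm a ha b hb]
    have hMB : M₁.prod M₂ ≤ B := by
      rw [← himg]
      exact Subgroup.map_mono hMA
    have hB1 : B.map (MonoidHom.fst _ _) = M₁ := by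
      refine hmax1 _ ?_ ?_
      · intro m hm
        exact ⟨(m, 1), hMB ⟨hm, M₂.one_mem⟩, rfl⟩
      · rintro x ⟨a, ha, rfl⟩ y ⟨b, hb, rfl⟩
        have := hBcomm a ha b hb
        exact congrArg Prod.fst this
    have hB2 : B.map (MonoidHom.snd _ _) = M₂ := by
      refine hmax2 _ ?_ ?_
      · intro m hm
        exact ⟨(1, m), hMB ⟨M₁.one_mem, hm⟩, rfl⟩
      · rintro x ⟨a, ha, rfl⟩ y ⟨b, hb, rfl⟩
        have := hBcomm a ha b hb
        exact congrArg Prod.snd this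
    have hAM : A ≤ M := by
      intro x hx
      have h1 : (e x).1 ∈ M₁ := by
        rw [← hB1]; exact ⟨e x, ⟨x, hx, rfl⟩, rfl⟩
      have h2 : (e x).2 ∈ M₂ := by
        rw [← hB2]; exact ⟨e x, ⟨x, hx, rfl⟩, rfl⟩
      have : e x ∈ M.map e.toMonoidHom := by
        rw [himg]; exact ⟨h1, h2⟩
      obtain ⟨y, hy, hyx⟩ := this
      rwa [← e.injective hyx]
    exact le_antisymm hAM hMA
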